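/- There exists a family S of 2^{ℵ₁} stationary subsets of ω₁ \ {0} such that for all distinct X, Y ∈ S, the set X \ Y is stationary in ω₁. -/

import Mathlib

open Cardinal Set

/-- `S` is a club (closed unbounded) subset of the ordinal `o`. -/
def IsClubIn (S : Set Ordinal) (o : Ordinal) : Prop :=
  S ⊆ Set.Iio o ∧ (∀ a < o, ∃ b ∈ S, a ≤ b) ∧
    ∀ a < o, a ≠ 0 → (∀ b < a, ∃ c ∈ S, b < c ∧ c < a) → a ∈ S

/-- `S` is a stationary subset of the ordinal `o`: it meets every club subset of `o`. -/
def IsStationaryIn (S : Set Ordinal) (o : Ordinal) : Prop :=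
  ∀ C : Set Ordinal, IsClubIn C o → (S ∩ C).Nonempty

namespace StatAux

noncomputable section


lemma kappa_isLimit : Order.IsSuccLimit (aleph 1).ord := Cardinal.isSuccLimit_ord (aleph0_le_aleph 1)

lemma kappa_pos : (0 : Ordinal) < (aleph 1).ord := kappa_isLimit.pos

lemma succ_lt_kappa {a : Ordinal} (h : a < (aleph 1).ord) : a + 1 < (aleph 1).ord := by
  rw [Ordinal.add_one_eq_succ]; exact kappa_isLimit.succ_lt h

/-- Countable intersections of clubs in `ω₁` are club. -/
lemma isClubIn_iInter {C : ℕ → Set Ordinal} (h : ∀ n, IsClubIn (C n) (aleph 1).ord) :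
    IsClubIn (⋂ n, C n) (aleph 1).ord := by
  classical
  -- a choice of an element of `C n` above `x`
  have hnext : ∀ n, ∀ x < (aleph 1).ord, ∃ b ∈ C n, x ≤ b := fun n => (h n).2.1
  set next : ℕ → Ordinal → Ordinal := fun n x =>
    if hx : x < (aleph 1).ord then (hnext n x hx).choose else 0 with hnextdef
  have hnext_mem : ∀ n, ∀ x, x < (aleph 1).ord → next n x ∈ C n ∧ x ≤ next n x := by
    intro n x hx
    simp only [hnextdef, dif_pos hx]
    exact ⟨(hnext n x hx).choose_spec.1, (hnext n x hx).choose_spec.2⟩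
  refine ⟨fun x hx => (h 0).1 (Set.mem_iInter.1 hx 0), ?_, ?_⟩
  · -- unboundedness
    intro a ha
    set g : ℕ → Ordinal := fun k => Nat.rec (a + 1)
      (fun k ih => next (Nat.unpair k).1 ih + 1) k with hg
    have hg0 : g 0 = a + 1 := rfl
    have hgs : ∀ k, g (k + 1) = next (Nat.unpair k).1 (g k) + 1 := fun k => rfl
    have hglt : ∀ k, g k < (aleph 1).ord := by
      intro k
      induction k with
      | zero => exact succ_lt_kappa ha
      | succ k ih =>
        rw [hgs]
        exact succ_lt_kappa ((h _).1 (hnext_mem _ _ ih).1)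
    have hgmono : StrictMono g := by
      apply strictMono_nat_of_lt_succ
      intro k
      rw [hgs]
      exact lt_of_le_of_lt (hnext_mem _ _ (hglt k)).2 (Order.lt_succ _)
    set s : Ordinal := iSup g with hs
    have hslt : s < (aleph 1).ord := by rw [Cardinal.ord_aleph]; exact Ordinal.iSup_lt_omega_one (by simpa [Cardinal.ord_aleph] using hglt)
    have hles : ∀ k, g k ≤ s := fun k => Ordinal.le_iSup g k
    have has : a ≤ s := le_of_lt (lt_of_lt_of_le (lt_of_lt_of_le
      (Order.lt_succ a) (by rw [← Ordinal.add_one_eq_succ, ← hg0])) (hles 0))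
    refine ⟨s, ?_, has⟩
    rw [Set.mem_iInter]
    intro n
    refine (h n).2.2 s hslt ?_ ?_
    · have hspos : 0 < s := by
        refine lt_of_lt_of_le ?_ (hles 0)
        rw [hg0, Ordinal.add_one_eq_succ]
        exact lt_of_le_of_lt (zero_le (a := a)) (Order.lt_succ a)
      exact hspos.ne'
    · intro b hb
      obtain ⟨k, hk⟩ := Ordinal.lt_iSup_iff.1 hb
      set k' := Nat.pair n k with hk'
      refine ⟨next n (g k'), ?_, ?_, ?_⟩
      · have := (hnext_mem n (g k') (hglt k')).1
        exact this
      · exact lt_of_lt_of_le hk (le_trans (hgmono.monotone (Nat.right_le_pair n k))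
          (hnext_mem n (g k') (hglt k')).2)
      · calc next n (g k') < next n (g k') + 1 := Order.lt_succ _
          _ = g (k' + 1) := by rw [hgs]; simp [hk', Nat.unpair_pair]
          _ ≤ s := hles (k' + 1)
  · -- closedness
    intro a ha ha0 hcl
    rw [Set.mem_iInter]
    intro n
    refine (h n).2.2 a ha ha0 ?_
    intro b hb
    obtain ⟨c, hc, hbc, hca⟩ := hcl b hb
    exact ⟨c, Set.mem_iInter.1 hc n, hbc, hca⟩

lemma isClubIn_inter {C D : Set Ordinal} (hC : IsClubIn C (aleph 1).ord)
    (hD : IsClubIn D (aleph 1).ord) : IsClubIn (C ∩ D) (aleph 1).ord := by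
  have : C ∩ D = ⋂ n : ℕ, (fun n => Nat.rec C (fun _ _ => D) n : ℕ → Set Ordinal) n := by
    apply Set.Subset.antisymm
    · intro x hx
      rw [Set.mem_iInter]
      rintro (_ | n)
      · exact hx.1
      · exact hx.2
    · intro x hx
      rw [Set.mem_iInter] at hx
      exact ⟨hx 0, hx 1⟩
  rw [this]
  exact isClubIn_iInter (by rintro (_ | n) <;> assumption)

lemma isClubIn_Iio : IsClubIn (Set.Iio (aleph 1).ord) (aleph 1).ord :=
  ⟨Set.Subset.rfl, fun a ha => ⟨a, ha, le_rfl⟩, fun a ha _ _ => ha⟩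

lemma isClubIn_Ioo {α : Ordinal} (hα : α < (aleph 1).ord) :
    IsClubIn (Set.Ioo α (aleph 1).ord) (aleph 1).ord := by
  refine ⟨fun x hx => hx.2, ?_, ?_⟩
  · intro a ha
    refine ⟨max a (α + 1), ⟨?_, ?_⟩, le_max_left _ _⟩
    · exact lt_of_lt_of_le (by rw [Ordinal.add_one_eq_succ]; exact Order.lt_succ α)
        (le_max_right _ _)
    · exact max_lt ha (succ_lt_kappa hα)
  · intro a ha ha0 hcl
    obtain ⟨c, hc, _, hca⟩ := hcl 0 (pos_iff_ne_zero.2 ha0)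
    exact ⟨lt_trans hc.1 hca, ha⟩

lemma isClubIn.stationary {C : Set Ordinal} (hC : IsClubIn C (aleph 1).ord) :
    IsStationaryIn C (aleph 1).ord := by
  intro D hD
  obtain ⟨b, hb, -⟩ := (isClubIn_inter hC hD).2.1 0 kappa_pos
  exact ⟨b, hb⟩

lemma isStationaryIn.mono {A B : Set Ordinal} (hAB : A ⊆ B)
    (hA : IsStationaryIn A (aleph 1).ord) : IsStationaryIn B (aleph 1).ord := by
  intro C hC
  obtain ⟨x, hx1, hx2⟩ := hA C hC
  exact ⟨x, hAB hx1, hx2⟩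

lemma isStationaryIn.inter_club {A C : Set Ordinal} (hA : IsStationaryIn A (aleph 1).ord)
    (hC : IsClubIn C (aleph 1).ord) : IsStationaryIn (A ∩ C) (aleph 1).ord := by
  intro D hD
  obtain ⟨x, hx1, hx2⟩ := hA (C ∩ D) (isClubIn_inter hC hD)
  exact ⟨x, ⟨hx1, hx2.1⟩, hx2.2⟩

lemma isStationaryIn.nonempty {A : Set Ordinal} (hA : IsStationaryIn A (aleph 1).ord) :
    A.Nonempty := by
  obtain ⟨x, hx, -⟩ := hA _ isClubIn_Iio
  exact ⟨x, hx⟩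

lemma countable_Iio {β : Ordinal} (hβ : β < (aleph 1).ord) :
    Countable (Set.Iio β) := by
  rw [← Cardinal.mk_le_aleph0_iff, Ordinal.mk_Iio_ordinal]
  have : β.card < ℵ₁ := Cardinal.lt_ord.1 hβ
  have : β.card ≤ ℵ₀ := Order.le_of_lt_succ (by rwa [Cardinal.succ_aleph0])
  rwa [Cardinal.lift_le_aleph0]

/-- For `β < ω₁`, an injection of `Iio β` into `ℕ`, as a total function on ordinals. -/
def inj (β : Ordinal) : Ordinal → ℕ :=
  if hβ : β < (aleph 1).ord then
    haveI := countable_Iio hβ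
    fun α => if hα : α < β then
      (Countable.exists_injective_nat (Set.Iio β)).choose ⟨α, hα⟩ else 0
  else fun _ => 0

lemma inj_injOn {β : Ordinal} (hβ : β < (aleph 1).ord) {α α' : Ordinal}
    (hα : α < β) (hα' : α' < β) (h : inj β α = inj β α') : α = α' := by
  haveI := countable_Iio hβ
  rw [inj, dif_pos hβ] at h
  simp only [dif_pos hα, dif_pos hα'] at h
  have := (Countable.exists_injective_nat (Set.Iio β)).choose_spec h
  exact Subtype.ext_iff.1 this

/-- The Ulam matrix. -/
def ulam (n : ℕ) (α : Ordinal) : Set Ordinal :=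
  {β | α < β ∧ β < (aleph 1).ord ∧ inj β α = n}

lemma ulam_disjoint {n : ℕ} {α α' : Ordinal} (h : α ≠ α') :
    ulam n α ∩ ulam n α' = ∅ := by
  rw [Set.eq_empty_iff_forall_notMem]
  rintro β ⟨⟨h1, h2, h3⟩, ⟨h1', h2', h3'⟩⟩
  exact h (inj_injOn h2 h1 h1' (h3.trans h3'.symm))

lemma exists_ulam_stationary {α : Ordinal} (hα : α < (aleph 1).ord) :
    ∃ n, IsStationaryIn (ulam n α) (aleph 1).ord := by
  by_contra hcon
  push_neg at hcon
  have : ∀ n, ∃ C, IsClubIn C (aleph 1).ord ∧ ulam n α ∩ C = ∅ := by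
    intro n
    have h' : ¬ ∀ C, IsClubIn C (aleph 1).ord → (ulam n α ∩ C).Nonempty := hcon n
    obtain ⟨C, hC⟩ := not_forall.1 h'
    obtain ⟨hC1, hC2⟩ := _root_.not_imp.1 hC
    exact ⟨C, hC1, Set.not_nonempty_iff_eq_empty.1 hC2⟩
  choose Cf hCf hCempty using this
  have hD : IsClubIn (Set.Ioo α (aleph 1).ord ∩ ⋂ n, Cf n) (aleph 1).ord :=
    isClubIn_inter (isClubIn_Ioo hα) (isClubIn_iInter hCf)
  obtain ⟨β, ⟨hβ1, hβ2⟩⟩ := isStationaryIn.nonempty (isClubIn.stationary hD)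
  have hβκ : β < (aleph 1).ord := hβ1.2
  have : β ∈ ulam (inj β α) α := ⟨hβ1.1, hβκ, rfl⟩
  have : β ∈ ulam (inj β α) α ∩ Cf (inj β α) :=
    ⟨this, Set.mem_iInter.1 hβ2 (inj β α)⟩
  rw [hCempty] at this
  exact this

end

end StatAux


open StatAux

/-- There is a family of `2^{ℵ₁}` stationary subsets of `ω₁ \ {0}` such that the difference of
any two distinct members is stationary in `ω₁`. -/
theorem exists_family_stationary_differences :
    ∃ 𝒮 : Set (Set Ordinal),
      Cardinal.mk 𝒮 = 2 ^ (Cardinal.aleph 1) ∧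
      (∀ X ∈ 𝒮, X ⊆ Set.Iio (Cardinal.aleph 1).ord \ {0} ∧
        IsStationaryIn X (Cardinal.aleph 1).ord) ∧
      ∀ X ∈ 𝒮, ∀ Y ∈ 𝒮, X ≠ Y → IsStationaryIn (X \ Y) (Cardinal.aleph 1).ord := by
  classical
  set T := Set.Iio (aleph 1).ord with hTdef
  have hmkT : #T = aleph 1 := by
    rw [hTdef, Ordinal.mk_Iio_ordinal, Cardinal.card_ord, Cardinal.lift_aleph, Ordinal.lift_one]
  -- choose a stationary row of the Ulam matrix for each `α < ω₁`
  have hT : ∀ t : T, ∃ n, IsStationaryIn (ulam n t.1) (aleph 1).ord :=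
    fun t => exists_ulam_stationary t.2
  choose nn hnn using hT
  -- some fiber of `nn` is uncountable
  have hfib : ∃ m : ℕ, ¬ ({t : T | nn t = m} : Set T).Countable := by
    by_contra hcon
    push_neg at hcon
    have huniv : (Set.univ : Set T) = ⋃ m : ℕ, {t : T | nn t = m} := by
      ext t; simp
    have : (Set.univ : Set T).Countable := by
      rw [huniv]; exact Set.countable_iUnion hcon
    have hc : Countable T := Set.countable_univ_iff.1 this
    have h1 : #T ≤ ℵ₀ := Cardinal.mk_le_aleph0
    rw [hmkT] at h1
    exact absurd h1 (not_le.2 aleph0_lt_aleph_one)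
  obtain ⟨m, hm⟩ := hfib
  set F : Set T := {t : T | nn t = m} with hFdef
  have hmkF : #F = aleph 1 := by
    refine le_antisymm (le_trans (Cardinal.mk_set_le F) hmkT.le) ?_
    rw [← not_lt, ← Cardinal.countable_iff_lt_aleph_one]
    exact hm
  -- an equivalence `T × Bool ≃ F`
  have hmkP : #(T × Bool) = aleph 1 := by
    rw [Cardinal.mk_prod, Cardinal.lift_uzero, Cardinal.mk_bool, Cardinal.lift_two, hmkT]
    exact Cardinal.mul_eq_left (aleph0_le_aleph 1)
      (le_trans (Cardinal.nat_lt_aleph0 2).le (aleph0_le_aleph 1)) two_ne_zero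
  have hPF : Nonempty ((T × Bool) ≃ F) := Cardinal.eq.1 (hmkP.trans hmkF.symm)
  obtain ⟨e⟩ := hPF
  set ap : T × Bool → Ordinal := fun p => ((e p : T) : Ordinal) with hapdef
  have hapinj : Function.Injective ap :=
    Subtype.val_injective.comp (Subtype.val_injective.comp e.injective)
  set S : T × Bool → Set Ordinal :=
    fun p => ulam m (ap p) ∩ Set.Ioo 0 (aleph 1).ord with hSdef
  have hS_stat : ∀ p, IsStationaryIn (S p) (aleph 1).ord := by
    intro p
    have h1 : nn (e p : T) = m := (e p).2
    have := hnn (e p : T)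
    rw [h1] at this
    exact isStationaryIn.inter_club this (isClubIn_Ioo kappa_pos)
  have hS_sub : ∀ p, S p ⊆ Set.Iio (aleph 1).ord \ {0} := by
    intro p x hx
    exact ⟨hx.2.2, fun h0 => absurd hx.2.1 (by simp [Set.mem_singleton_iff.1 h0])⟩
  have hS_disj : ∀ p q, p ≠ q → S p ∩ S q = ∅ := by
    intro p q hpq
    have := ulam_disjoint (n := m) (hapinj.ne hpq)
    rw [Set.eq_empty_iff_forall_notMem] at this ⊢
    intro x hx
    exact this x ⟨hx.1.1, hx.2.1⟩
  set X : (T → Bool) → Set Ordinal := fun f => ⋃ t : T, S (t, f t) with hXdef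
  have hTne : Nonempty T := ⟨⟨0, kappa_pos⟩⟩
  obtain ⟨t₀⟩ := hTne
  have hX_stat : ∀ f, IsStationaryIn (X f) (aleph 1).ord := by
    intro f
    exact isStationaryIn.mono (Set.subset_iUnion (fun t => S (t, f t)) t₀) (hS_stat _)
  have hX_sub : ∀ f, X f ⊆ Set.Iio (aleph 1).ord \ {0} :=
    fun f => Set.iUnion_subset fun t => hS_sub _
  have hX_diff : ∀ f g, f ≠ g → IsStationaryIn (X f \ X g) (aleph 1).ord := by
    intro f g hfg
    obtain ⟨t, ht⟩ := Function.ne_iff.1 hfg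
    refine isStationaryIn.mono ?_ (hS_stat (t, f t))
    intro x hx
    refine ⟨Set.mem_iUnion.2 ⟨t, hx⟩, ?_⟩
    intro hxg
    obtain ⟨t', hxt'⟩ := Set.mem_iUnion.1 hxg
    have hne : (t, f t) ≠ (t', g t') := by
      intro h
      have h1 : t = t' := congrArg Prod.fst h
      have h2 : f t = g t' := congrArg Prod.snd h
      exact ht (h2.trans (congrArg g h1).symm)
    have := hS_disj _ _ hne
    rw [Set.eq_empty_iff_forall_notMem] at this
    exact this x ⟨hx, hxt'⟩
  have hXinj : Function.Injective X := by
    intro f g hfg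
    by_contra hne
    obtain ⟨x, hx⟩ := isStationaryIn.nonempty (hX_diff f g hne)
    rw [hfg] at hx
    exact hx.2 hx.1
  refine ⟨Set.range X, ?_, ?_, ?_⟩
  · rw [Cardinal.mk_range_eq X hXinj, Cardinal.mk_arrow, Cardinal.lift_uzero, hmkT,
      Cardinal.mk_bool, Cardinal.lift_two]
  · rintro Y ⟨f, rfl⟩
    exact ⟨hX_sub f, hX_stat f⟩
  · rintro Y ⟨f, rfl⟩ Z ⟨g, rfl⟩ hYZ
    exact hX_diff f g (fun h => hYZ (by rw [h]))
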